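/- The three sequences (2⌊φn⌋+2)_{n≥1}, (2⌊φ²n⌋+2)_{n≥1}, and (2n+1)_{n≥1} form an exact cover of {3,4,5,...}: every integer m ≥ 3 occurs exactly once in exactly one of these three sequences. -/

import Mathlib

noncomputable def goldenPhi : ℝ := (1 + Real.sqrt 5) / 2

/-- The three sequences, indexed by `Fin 3`, each with index n ≥ 1. -/
noncomputable def threeSeq : Fin 3 → ℕ → ℕ
  | 0, n => 2 * ⌊goldenPhi * n⌋₊ + 2
  | 1, n => 2 * ⌊goldenPhi ^ 2 * n⌋₊ + 2
  | 2, n => 2 * n + 1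

lemma sqrt5_lt : 2 < Real.sqrt 5 := by
  have : (2:ℝ) = Real.sqrt 4 := by
    rw [show (4:ℝ) = 2^2 by norm_num, Real.sqrt_sq]; norm_num
  rw [this]
  exact Real.sqrt_lt_sqrt (by norm_num) (by norm_num)

lemma one_lt_phi : 1 < goldenPhi := by
  unfold goldenPhi; nlinarith [sqrt5_lt]

lemma phi_sq : goldenPhi ^ 2 = goldenPhi + 1 := by
  unfold goldenPhi
  have h5 : Real.sqrt 5 ^ 2 = 5 := Real.sq_sqrt (by norm_num)
  ring_nf
  nlinarith [h5]

lemma phi_conj : goldenPhi.HolderConjugate (goldenPhi ^ 2) := by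
  rw [Real.holderConjugate_iff]
  constructor
  · exact one_lt_phi
  · have h0 : (0:ℝ) < goldenPhi := lt_trans one_pos one_lt_phi
    field_simp
    nlinarith [phi_sq]

lemma phi_irrational : Irrational goldenPhi := by
  have h5 : Irrational (Real.sqrt 5) := by
    rw [show (5:ℝ) = ((5:ℕ):ℝ) by norm_num]
    exact (by norm_num : Nat.Prime 5).irrational_sqrt
  have : Irrational (1 + Real.sqrt 5) := by
    simpa using h5.ratCast_add 1
  have h2 : Irrational ((1 + Real.sqrt 5) / (2:ℕ)) := this.div_natCast (by norm_num)
  simpa [goldenPhi] using h2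

/-- strict mono of floor sequence -/
lemma floor_seq_strictMono {c : ℝ} (hc : 1 < c) :
    StrictMono (fun n : ℕ => ⌊c * n⌋₊) := by
  apply strictMono_nat_of_lt_succ
  intro n
  have h0 : (0:ℝ) < c := lt_trans one_pos hc
  have h1 : (⌊c * n⌋₊ : ℝ) + 1 ≤ c * (n + 1) := by
    have := Nat.floor_le (by positivity : (0:ℝ) ≤ c * n)
    push_cast
    nlinarith
  have h2 : ⌊c * n⌋₊ + 1 ≤ ⌊c * ((n:ℕ)+1 : ℕ)⌋₊ := by
    apply Nat.le_floor
    push_cast at h1 ⊢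
    linarith
  exact Nat.lt_of_succ_le h2

/-- membership translation ℤ → ℕ -/
lemma beatty_mem_iff {c : ℝ} (hc : 0 < c) (k : ℕ) :
    ((k:ℤ) ∈ {x | ∃ n > 0, beattySeq c n = x}) ↔ ∃ n : ℕ, 0 < n ∧ ⌊c * n⌋₊ = k := by
  constructor
  · rintro ⟨n, hn, hfn⟩
    lift n to ℕ using le_of_lt hn
    refine ⟨n, by exact_mod_cast hn, ?_⟩
    have hnn : (0:ℝ) ≤ c * n := by positivity
    have : (⌊c * (n:ℝ)⌋₊ : ℤ) = ⌊c * (n:ℝ)⌋ := Int.natCast_floor_eq_floor hnn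
    rw [beattySeq, mul_comm] at hfn
    push_cast at hfn
    omega
  · rintro ⟨n, hn, hfn⟩
    refine ⟨(n:ℤ), by exact_mod_cast hn, ?_⟩
    rw [beattySeq]
    have hnn : (0:ℝ) ≤ c * n := by positivity
    have h := Int.natCast_floor_eq_floor hnn
    rw [hfn] at h
    rw [show ((n:ℤ):ℝ) = (n:ℝ) by push_cast; ring, mul_comm]
    exact h.symm

lemma beatty_xor (k : ℕ) (hk : 0 < k) :
    Xor' (∃ n : ℕ, 0 < n ∧ ⌊goldenPhi * n⌋₊ = k)
      (∃ n : ℕ, 0 < n ∧ ⌊goldenPhi ^ 2 * n⌋₊ = k) := by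
  have hset := phi_irrational.beattySeq_symmDiff_beattySeq_pos phi_conj
  have hmem : (k:ℤ) ∈ symmDiff {x | ∃ n > 0, beattySeq goldenPhi n = x}
      {x | ∃ n > 0, beattySeq (goldenPhi ^ 2) n = x} := by
    rw [hset]; simp; exact_mod_cast hk
  rw [Set.mem_symmDiff] at hmem
  have h1 := beatty_mem_iff (lt_trans one_pos one_lt_phi) k
  have h2 := beatty_mem_iff (c := goldenPhi ^ 2)
    (by nlinarith [one_lt_phi] : (0:ℝ) < goldenPhi ^ 2) k
  rcases hmem with ⟨ha, hb⟩ | ⟨hb, ha⟩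
  · exact Or.inl ⟨h1.mp ha, fun h => hb (h2.mpr h)⟩
  · exact Or.inr ⟨h2.mp hb, fun h => ha (h1.mpr h)⟩

theorem exact_cover_three :
    ∀ m : ℕ, 3 ≤ m → ∃! p : Fin 3 × ℕ, 0 < p.2 ∧ threeSeq p.1 p.2 = m := by
  intro m hm
  have hmono0 := floor_seq_strictMono one_lt_phi
  have hmono1 := floor_seq_strictMono (c := goldenPhi ^ 2)
    (by nlinarith [one_lt_phi] : 1 < goldenPhi ^ 2)
  rcases Nat.even_or_odd m with he | ho
  · -- m even, m = 2k+2 with k ≥ 1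
    obtain ⟨k, hk⟩ : ∃ k, m = 2 * k + 2 := by
      rcases he with ⟨t, ht⟩; exact ⟨t - 1, by omega⟩
    have hkpos : 0 < k := by omega
    rcases beatty_xor k hkpos with ⟨⟨n, hn, hfn⟩, hnB⟩ | ⟨⟨n, hn, hfn⟩, hnA⟩
    · refine ⟨(0, n), ⟨hn, by simp [threeSeq, hfn]; omega⟩, ?_⟩
      rintro ⟨i, q⟩ ⟨hq, hval⟩
      fin_cases i <;> simp [threeSeq] at hval ⊢
      · have : ⌊goldenPhi * q⌋₊ = k := by omega
        exact hmono0.injective (this.trans hfn.symm)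
      · exact absurd ⟨q, hq, by omega⟩ hnB
      · omega
    · refine ⟨(1, n), ⟨hn, by simp [threeSeq, hfn]; omega⟩, ?_⟩
      rintro ⟨i, q⟩ ⟨hq, hval⟩
      fin_cases i <;> simp [threeSeq] at hval ⊢
      · exact absurd ⟨q, hq, by omega⟩ hnA
      · have : ⌊goldenPhi ^ 2 * q⌋₊ = k := by omega
        exact hmono1.injective (this.trans hfn.symm)
      · omega
  · -- m odd, m = 2n+1 with n ≥ 1
    obtain ⟨n, hn⟩ : ∃ n, m = 2 * n + 1 := by
      rcases ho with ⟨t, ht⟩; exact ⟨t, by omega⟩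
    refine ⟨(2, n), ⟨by omega, by simp [threeSeq]; omega⟩, ?_⟩
    rintro ⟨i, q⟩ ⟨hq, hval⟩
    fin_cases i <;> simp [threeSeq] at hval ⊢ <;> omega
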